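/- Let v₁, …, v_n be a basis of ℝⁿ, Λ the lattice it spans, U its unit cell with diameter d, M ⊂ U a finite motif of exactly m ≥ 1 points, S = M + Λ, and PPC(S) = (vol(U)/(m·V_n))^{1/n} where V_n is the volume of the unit ball of ℝⁿ. Fix integers h, k ≥ 1 and a real number b ≥ h with C(b,h) = b(b−1)⋯(b−h+1)/h! ∈ (k−1, k]. Then for every p ∈ S, the k-th smallest h-order average a(h,k) at p over h-element subsets of S∖{p} satisfies (2/(h+1))·(PPC(S)·(b+1)^{1/n} − d) ≤ a(h,k) ≤ (2h/(h+1))·(PPC(S)·(b+1)^{1/n} + d). -/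

import Mathlib

open scoped ENNReal

/-- The h-order average of a point `p` together with a finite set `T` of
points: the mean `(2/(h(h+1))) Σ_{0≤i<j≤h} dist(p_i,p_j)` of all pairwise
distances among the `h+1` points `p, T` (for `T` of cardinality `h` not
containing `p`). -/
noncomputable def horderAvg {E : Type*} [PseudoMetricSpace E] (h : ℕ)
    (p : E) (T : Finset E) : ℝ :=
  2 / ((h : ℝ) * ((h : ℝ) + 1)) *
    ((∑ q ∈ T, dist p q) + (∑ q ∈ T, ∑ r ∈ T, dist q r) / 2)

open Submodule MeasureTheory Metric Set Bornology

section AvgLemmas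
lemma horderAvg_nonneg {E : Type*} [PseudoMetricSpace E] (h : ℕ) (p : E) (T : Finset E) :
    0 ≤ horderAvg h p T := by
  unfold horderAvg
  have h1 : (0:ℝ) ≤ ∑ q ∈ T, dist p q := Finset.sum_nonneg fun q _ => dist_nonneg
  have h2 : (0:ℝ) ≤ ∑ q ∈ T, ∑ r ∈ T, dist q r :=
    Finset.sum_nonneg fun q _ => Finset.sum_nonneg fun r _ => dist_nonneg
  positivity

lemma horderAvg_le {E : Type*} [PseudoMetricSpace E] {h : ℕ} (hh : 1 ≤ h) (p : E)
    {T : Finset E} (hT : T.card = h) {R : ℝ} (hR : ∀ q ∈ T, dist p q ≤ R) :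
    horderAvg h p T ≤ 2 * (h:ℝ) / ((h:ℝ) + 1) * R := by
  classical
  have hhpos : (0:ℝ) < h := by exact_mod_cast hh
  obtain ⟨q0, hq0⟩ := Finset.card_pos.1 (by omega : 0 < T.card)
  have hR0 : 0 ≤ R := le_trans dist_nonneg (hR q0 hq0)
  have h1 : ∑ q ∈ T, dist p q ≤ (h:ℝ) * R := by
    calc ∑ q ∈ T, dist p q ≤ ∑ _q ∈ T, R := Finset.sum_le_sum hR
    _ = (h:ℝ) * R := by rw [Finset.sum_const, hT]; simp [mul_comm]
  have h2 : ∑ q ∈ T, ∑ r ∈ T, dist q r ≤ (h:ℝ) * (((h:ℝ) - 1) * (2*R)) := by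
    calc ∑ q ∈ T, ∑ r ∈ T, dist q r
        ≤ ∑ _q ∈ T, (((h:ℝ) - 1) * (2*R)) := by
          refine Finset.sum_le_sum fun q hq => ?_
          have e0 : ∑ r ∈ T, dist q r = ∑ r ∈ T.erase q, dist q r := by
            rw [← Finset.add_sum_erase T _ hq, dist_self, zero_add]
          rw [e0]
          calc ∑ r ∈ T.erase q, dist q r ≤ ∑ _r ∈ T.erase q, 2*R := by
                refine Finset.sum_le_sum fun r hr => ?_
                calc dist q r ≤ dist q p + dist p r := dist_triangle _ _ _
                _ ≤ R + R := by
                    rw [dist_comm q p]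
                    exact add_le_add (hR q hq) (hR r (Finset.mem_of_mem_erase hr))
                _ = 2*R := by ring
          _ = (((h:ℝ) - 1) * (2*R)) := by
                rw [Finset.sum_const, Finset.card_erase_of_mem hq, hT]
                rw [nsmul_eq_mul, Nat.cast_sub hh]
                norm_num
    _ = (h:ℝ) * (((h:ℝ) - 1) * (2*R)) := by rw [Finset.sum_const, hT]; simp [mul_comm]
  have key : (∑ q ∈ T, dist p q) + (∑ q ∈ T, ∑ r ∈ T, dist q r) / 2
      ≤ (h:ℝ)^2 * R := by nlinarith
  calc horderAvg h p T ≤ 2 / ((h : ℝ) * ((h : ℝ) + 1)) * ((h:ℝ)^2 * R) := by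
        unfold horderAvg
        exact mul_le_mul_of_nonneg_left key (by positivity)
  _ = 2 * (h:ℝ) / ((h:ℝ) + 1) * R := by field_simp

lemma le_horderAvg {E : Type*} [PseudoMetricSpace E] {h : ℕ} (hh : 1 ≤ h) (p : E)
    {T : Finset E} (hT : T.card = h) {q : E} (hq : q ∈ T) :
    2 / ((h:ℝ) + 1) * dist p q ≤ horderAvg h p T := by
  classical
  have hhpos : (0:ℝ) < h := by exact_mod_cast hh
  have key1 : ∑ q' ∈ T, dist p q' = dist p q + ∑ r ∈ T.erase q, dist p r :=
    (Finset.add_sum_erase T _ hq).symm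
  have key2 : ∑ r ∈ T.erase q, dist q r ≤ (∑ q' ∈ T, ∑ r' ∈ T, dist q' r') / 2 := by
    rw [le_div_iff₀ (by norm_num : (0:ℝ) < 2)]
    have e1 : ∑ q' ∈ T, ∑ r' ∈ T, dist q' r'
        = (∑ r' ∈ T, dist q r') + ∑ q' ∈ T.erase q, ∑ r' ∈ T, dist q' r' :=
      (Finset.add_sum_erase T _ hq).symm
    have e2 : ∑ r' ∈ T, dist q r' = ∑ r ∈ T.erase q, dist q r := by
      rw [← Finset.add_sum_erase T _ hq, dist_self, zero_add]
    have e3 : ∑ q' ∈ T.erase q, dist q' q ≤ ∑ q' ∈ T.erase q, ∑ r' ∈ T, dist q' r' := by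
      refine Finset.sum_le_sum fun q' _ => ?_
      exact Finset.single_le_sum (f := fun r' => dist q' r') (fun r _ => dist_nonneg) hq
    have e4 : ∑ q' ∈ T.erase q, dist q' q = ∑ r ∈ T.erase q, dist q r :=
      Finset.sum_congr rfl fun x _ => dist_comm _ _
    rw [e1, e2]
    nlinarith [e3, e4.ge, e4.le]
  have key3 : ∀ r ∈ T.erase q, dist p q ≤ dist p r + dist q r := by
    intro r _
    calc dist p q ≤ dist p r + dist r q := dist_triangle _ _ _
    _ = dist p r + dist q r := by rw [dist_comm r q]
  have key4 : (h:ℝ) * dist p q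
      ≤ (∑ q' ∈ T, dist p q') + (∑ q' ∈ T, ∑ r' ∈ T, dist q' r') / 2 := by
    have hcard : (T.erase q).card = h - 1 := by rw [Finset.card_erase_of_mem hq, hT]
    have e5 : ((h:ℝ) - 1) * dist p q ≤ ∑ r ∈ T.erase q, (dist p r + dist q r) := by
      calc ((h:ℝ) - 1) * dist p q = ∑ _r ∈ T.erase q, dist p q := by
            rw [Finset.sum_const, hcard, nsmul_eq_mul, Nat.cast_sub hh]; norm_num
      _ ≤ ∑ r ∈ T.erase q, (dist p r + dist q r) := Finset.sum_le_sum key3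
    rw [Finset.sum_add_distrib] at e5
    rw [key1]
    nlinarith [key2, e5, Finset.sum_nonneg (fun (r : E) (_ : r ∈ T.erase q) =>
      (dist_nonneg : (0:ℝ) ≤ dist p r))]
  calc 2 / ((h:ℝ) + 1) * dist p q
      = 2 / ((h : ℝ) * ((h : ℝ) + 1)) * ((h:ℝ) * dist p q) := by field_simp
  _ ≤ horderAvg h p T := by
      unfold horderAvg
      exact mul_le_mul_of_nonneg_left key4 (by positivity)

end AvgLemmas

lemma prod_range_choose (c h : ℕ) (hch : h ≤ c) :
    ∏ i ∈ Finset.range h, ((c:ℝ) - i) = (c.choose h : ℝ) * (h.factorial : ℝ) := by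
  have h1 : ∏ i ∈ Finset.range h, ((c:ℝ) - i) = ((c.descFactorial h : ℕ) : ℝ) := by
    rw [Nat.descFactorial_eq_prod_range, Nat.cast_prod]
    refine Finset.prod_congr rfl fun i hi => ?_
    rw [Nat.cast_sub (le_trans (le_of_lt (Finset.mem_range.1 hi)) hch)]
  rw [h1, Nat.descFactorial_eq_factorial_mul_choose]
  push_cast
  ring

section Lattice

variable {n : ℕ}

local notation "E'" => EuclideanSpace ℝ (Fin n)

lemma lat_eq (v : Module.Basis (Fin n) ℝ E') :
    {x : E' | ∃ c : Fin n → ℤ, x = ∑ i, (c i : ℝ) • v i}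
      = ((span ℤ (Set.range ⇑v) : Submodule ℤ E') : Set E') := by
  ext x
  rw [SetLike.mem_coe, mem_span_range_iff_exists_fun]
  constructor
  · rintro ⟨c, rfl⟩
    exact ⟨c, by simp [Int.cast_smul_eq_zsmul]⟩
  · rintro ⟨c, rfl⟩
    exact ⟨c, by simp [Int.cast_smul_eq_zsmul]⟩

lemma fd_eq (v : Module.Basis (Fin n) ℝ E') :
    {x : E' | ∃ t : Fin n → ℝ, (∀ i, t i ∈ Set.Ico (0:ℝ) 1) ∧ x = ∑ i, t i • v i}
      = ZSpan.fundamentalDomain v := by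
  ext x
  simp only [ZSpan.mem_fundamentalDomain, Set.mem_setOf_eq]
  constructor
  · rintro ⟨t, ht, rfl⟩
    intro i
    rw [v.repr_sum_self]; exact ht i
  · intro hx
    exact ⟨fun i => v.repr x i, hx, (v.sum_repr x).symm⟩

lemma lat_inter_finite (v : Module.Basis (Fin n) ℝ E') (s : Set E') (hs : IsBounded s) :
    (((span ℤ (Set.range ⇑v) : Submodule ℤ E') : Set E') ∩ s).Finite := by
  set L : Set E' := ((span ℤ (Set.range ⇑v) : Submodule ℤ E') : Set E') with hLdef
  have h1 : IsClosed L :=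
    AddSubgroup.isClosed_of_discrete
      (H := (span ℤ (Set.range ⇑v) : Submodule ℤ E').toAddSubgroup)
  obtain ⟨R, hR⟩ := hs.subset_closedBall 0
  have h2 : IsCompact (L ∩ closedBall (0 : E') R) :=
    (isCompact_closedBall (0 : E') R).inter_left h1
  have hD : DiscreteTopology L := by
    exact (inferInstance : DiscreteTopology (span ℤ (Set.range ⇑v)))
  have h3 : DiscreteTopology (L ∩ closedBall (0 : E') R : Set E') :=
    DiscreteTopology.of_subset hD Set.inter_subset_left
  exact (h2.finite ⟨h3⟩).subset (Set.inter_subset_inter_right _ hR)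

lemma decomp_unique (v : Module.Basis (Fin n) ℝ E') {a a' g g' : E'}
    (ha : a ∈ ZSpan.fundamentalDomain v) (ha' : a' ∈ ZSpan.fundamentalDomain v)
    (hg : g ∈ span ℤ (Set.range ⇑v)) (hg' : g' ∈ span ℤ (Set.range ⇑v))
    (heq : a + g = a' + g') : a = a' ∧ g = g' := by
  have h1 : ZSpan.fract v (a + g) = a := by
    rw [ZSpan.fract_add_ZSpan v _ hg, ZSpan.fract_eq_self.2 ha]
  have h2 : ZSpan.fract v (a' + g') = a' := by
    rw [ZSpan.fract_add_ZSpan v _ hg', ZSpan.fract_eq_self.2 ha']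
  have haa : a = a' := by rw [← h1, ← h2, heq]
  refine ⟨haa, ?_⟩
  rw [haa] at heq
  exact add_left_cancel heq

lemma cell_meas (v : Module.Basis (Fin n) ℝ E') (g : E') :
    MeasurableSet ((fun x => x + g) '' ZSpan.fundamentalDomain v) := by
  rw [Set.image_add_right]
  exact (ZSpan.fundamentalDomain_measurableSet v).preimage (measurable_add_const (-g))

lemma cell_vol (v : Module.Basis (Fin n) ℝ E') (g : E') :
    volume ((fun x => x + g) '' ZSpan.fundamentalDomain v)
      = volume (ZSpan.fundamentalDomain v) := by
  rw [Set.image_add_right]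
  exact measure_preimage_add_right volume (-g) _

lemma cell_cover (v : Module.Basis (Fin n) ℝ E') (x : E') :
    x ∈ (fun y => y + (ZSpan.floor v x : E')) '' ZSpan.fundamentalDomain v := by
  refine ⟨ZSpan.fract v x, ZSpan.fract_mem_fundamentalDomain v x, ?_⟩
  show ZSpan.fract v x + _ = x
  rw [ZSpan.fract_apply, sub_add_cancel]

lemma cell_disj (v : Module.Basis (Fin n) ℝ E') {g g' : E'}
    (hg : g ∈ span ℤ (Set.range ⇑v)) (hg' : g' ∈ span ℤ (Set.range ⇑v)) (hne : g ≠ g') :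
    Disjoint ((fun y => y + g) '' ZSpan.fundamentalDomain v)
      ((fun y => y + g') '' ZSpan.fundamentalDomain v) := by
  rw [Set.disjoint_left]
  rintro x ⟨u, hu, rfl⟩ ⟨u', hu', heq⟩
  replace heq : u' + g' = u + g := heq
  exact hne ((decomp_unique v hu' hu hg' hg heq).2.symm)

lemma count_upper (v : Module.Basis (Fin n) ℝ E') (G : Finset E') (s : Set E')
    (hcov : s ⊆ ⋃ g ∈ G, (fun y => y + g) '' ZSpan.fundamentalDomain v) :
    volume s ≤ G.card * volume (ZSpan.fundamentalDomain v) := by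
  calc volume s ≤ volume (⋃ g ∈ G, (fun y => y + g) '' ZSpan.fundamentalDomain v) :=
        measure_mono hcov
  _ ≤ ∑ g ∈ G, volume ((fun y => y + g) '' ZSpan.fundamentalDomain v) :=
        measure_biUnion_finset_le G _
  _ = G.card * volume (ZSpan.fundamentalDomain v) := by
        rw [Finset.sum_congr rfl fun g _ => cell_vol v g, Finset.sum_const, nsmul_eq_mul]

lemma count_lower (v : Module.Basis (Fin n) ℝ E') (G : Finset E')
    (hG : ∀ g ∈ G, g ∈ span ℤ (Set.range ⇑v)) (s : Set E')
    (hsub : ∀ g ∈ G, (fun y => y + g) '' ZSpan.fundamentalDomain v ⊆ s) :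
    (G.card : ℝ≥0∞) * volume (ZSpan.fundamentalDomain v) ≤ volume s := by
  have hdisj : (G : Set E').PairwiseDisjoint
      (fun g => (fun y => y + g) '' ZSpan.fundamentalDomain v) := by
    intro g hg g' hg' hne
    exact cell_disj v (hG g hg) (hG g' hg') hne
  calc (G.card : ℝ≥0∞) * volume (ZSpan.fundamentalDomain v)
      = ∑ g ∈ G, volume ((fun y => y + g) '' ZSpan.fundamentalDomain v) := by
        rw [Finset.sum_congr rfl fun g _ => cell_vol v g, Finset.sum_const, nsmul_eq_mul]
  _ = volume (⋃ g ∈ G, (fun y => y + g) '' ZSpan.fundamentalDomain v) :=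
        (measure_biUnion_finset hdisj fun g _ => cell_meas v g).symm
  _ ≤ volume s := measure_mono (Set.iUnion₂_subset hsub)

end Lattice
set_option maxHeartbeats 2000000 in
/-- Let `Λ` be the lattice spanned by a basis `v₁,…,v_n` of
`ℝⁿ`, `U` its unit cell with diameter `d`, `M ⊂ U` a motif of exactly `m ≥ 1`
points, `S = M + Λ`, and `PPC(S) = (vol(U)/(m·V_n))^(1/n)`. Fix `h, k ≥ 1`
and a real `b ≥ h` with `C(b,h) ∈ (k−1, k]`. Then for every `p ∈ S`, the
`k`-th smallest h-order average `a = a(h,k)` at `p` over `h`-element subsets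
of `S∖{p}` (characterized by: at most `k−1` such subsets have average `< a`
and at least `k` have average `≤ a`, with multiplicity) satisfies
`(2/(h+1))·(PPC(S)·(b+1)^(1/n) − d) ≤ a ≤ (2h/(h+1))·(PPC(S)·(b+1)^(1/n) + d)`. -/
theorem stmt_16 (n m h k : ℕ) (hn : 1 ≤ n) (hm : 1 ≤ m) (hh : 1 ≤ h) (hk : 1 ≤ k)
    (v : Module.Basis (Fin n) ℝ (EuclideanSpace ℝ (Fin n)))
    (Λ : Set (EuclideanSpace ℝ (Fin n)))
    (hΛ : Λ = {x | ∃ c : Fin n → ℤ, x = ∑ i, (c i : ℝ) • v i})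
    (U : Set (EuclideanSpace ℝ (Fin n)))
    (hU : U = {x | ∃ t : Fin n → ℝ, (∀ i, t i ∈ Set.Ico (0 : ℝ) 1) ∧
      x = ∑ i, t i • v i})
    (d : ℝ) (hd : d = Metric.diam U)
    (M : Finset (EuclideanSpace ℝ (Fin n))) (hMcard : M.card = m)
    (hMU : ∀ a ∈ M, a ∈ U)
    (S : Set (EuclideanSpace ℝ (Fin n)))
    (hS : S = {x | ∃ a ∈ M, ∃ g ∈ Λ, x = a + g})
    (PPC : ℝ)
    (hPPC : PPC = ((MeasureTheory.volume U).toReal /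
      ((m : ℝ) * (MeasureTheory.volume
        (Metric.ball (0 : EuclideanSpace ℝ (Fin n)) 1)).toReal)) ^ ((1 : ℝ) / n))
    (b : ℝ) (hbh : (h : ℝ) ≤ b)
    (hbin : (∏ i ∈ Finset.range h, (b - (i : ℝ))) / (h.factorial : ℝ) ∈
      Set.Ioc ((k : ℝ) - 1) (k : ℝ))
    (p : EuclideanSpace ℝ (Fin n)) (hp : p ∈ S) (a : ℝ)
    (hlt_fin : {T : Finset (EuclideanSpace ℝ (Fin n)) |
      ↑T ⊆ S \ {p} ∧ T.card = h ∧ horderAvg h p T < a}.Finite)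
    (hlt_card : {T : Finset (EuclideanSpace ℝ (Fin n)) |
      ↑T ⊆ S \ {p} ∧ T.card = h ∧ horderAvg h p T < a}.ncard ≤ k - 1)
    (hle_fin : {T : Finset (EuclideanSpace ℝ (Fin n)) |
      ↑T ⊆ S \ {p} ∧ T.card = h ∧ horderAvg h p T ≤ a}.Finite)
    (hle_card : k ≤ {T : Finset (EuclideanSpace ℝ (Fin n)) |
      ↑T ⊆ S \ {p} ∧ T.card = h ∧ horderAvg h p T ≤ a}.ncard) :
    2 / ((h : ℝ) + 1) * (PPC * (b + 1) ^ ((1 : ℝ) / n) - d) ≤ a ∧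
    a ≤ 2 * (h : ℝ) / ((h : ℝ) + 1) * (PPC * (b + 1) ^ ((1 : ℝ) / n) + d) := by
  classical
  have hn0 : n ≠ 0 := by omega
  haveI : Nonempty (Fin n) := ⟨⟨0, hn⟩⟩
  have hΛ' : Λ = ((span ℤ (Set.range ⇑v) : Submodule ℤ (EuclideanSpace ℝ (Fin n))) :
      Set (EuclideanSpace ℝ (Fin n))) := by rw [hΛ, lat_eq]
  have hU' : U = ZSpan.fundamentalDomain v := by rw [hU, fd_eq]
  -- diameter facts
  have hUb : IsBounded U := hU' ▸ ZSpan.fundamentalDomain_isBounded v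
  have hd0 : 0 ≤ d := hd ▸ Metric.diam_nonneg
  have hUdist : ∀ x ∈ U, ∀ y ∈ U, dist x y ≤ d := fun x hx y hy =>
    hd ▸ Metric.dist_le_diam_of_mem hUb hx hy
  have h0U : (0 : EuclideanSpace ℝ (Fin n)) ∈ U := by
    rw [hU]
    exact ⟨fun _ => 0, fun i => ⟨le_refl _, by norm_num⟩, by simp⟩
  -- volume facts
  set u : ℝ := (volume U).toReal with hudef
  set w : ℝ := (volume (Metric.ball (0 : EuclideanSpace ℝ (Fin n)) 1)).toReal with hwdef
  have hvU0 : volume U ≠ 0 := hU' ▸ ZSpan.measure_fundamentalDomain_ne_zero v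
  have hvUtop : volume U ≠ ⊤ := (hUb.measure_lt_top).ne
  have hu : 0 < u := ENNReal.toReal_pos hvU0 hvUtop
  have hw : 0 < w := ENNReal.toReal_pos (measure_ball_pos volume 0 one_pos).ne'
    measure_ball_lt_top.ne
  have hm0 : (0:ℝ) < m := by exact_mod_cast hm
  have hh1 : (0:ℝ) < (h:ℝ) + 1 := by positivity
  have hb1 : (0:ℝ) < b + 1 := by
    have : (1:ℝ) ≤ h := by exact_mod_cast hh
    linarith
  have hPPC0 : 0 < PPC := by
    rw [hPPC]
    exact Real.rpow_pos_of_pos (by positivity) _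
  set ρ : ℝ := PPC * (b + 1) ^ ((1 : ℝ) / n) with hρdef
  have hρ0 : 0 < ρ := by
    have : (0:ℝ) < (b + 1) ^ ((1 : ℝ) / n) := Real.rpow_pos_of_pos hb1 _
    positivity
  have hρn : ρ ^ n = (b + 1) * u / (↑m * w) := by
    have e1 : ((b + 1 : ℝ) ^ ((1:ℝ)/n)) ^ n = b + 1 := by
      rw [one_div]; exact Real.rpow_inv_natCast_pow hb1.le hn0
    have e2 : PPC ^ n = u / (↑m * w) := by
      rw [hPPC, one_div]
      exact Real.rpow_inv_natCast_pow (by positivity) hn0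
    rw [hρdef, mul_pow, e1, e2]
    ring
  -- ball volume computations
  have hvol_cb : ∀ R : ℝ, 0 ≤ R →
      (volume (Metric.closedBall p R)).toReal = R ^ n * w := by
    intro R hR
    rw [Measure.addHaar_closedBall volume p hR, ENNReal.toReal_mul,
      ENNReal.toReal_ofReal (by positivity), finrank_euclideanSpace, Fintype.card_fin]
  have hvol_ball : (volume (Metric.ball p ρ)).toReal = (b + 1) * u / ↑m := by
    rw [Measure.addHaar_ball volume p hρ0.le, ENNReal.toReal_mul,
      ENNReal.toReal_ofReal (by positivity), finrank_euclideanSpace, Fintype.card_fin,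
      hρn]
    field_simp
    rw [← hwdef]
  -- generic helpers
  have hMU2 : ∀ a0 ∈ M, a0 ∈ ZSpan.fundamentalDomain v := by
    intro a0 ha0; rw [← hU']; exact hMU a0 ha0
  have hdist_lat : ∀ f g : EuclideanSpace ℝ (Fin n), f ∈ ZSpan.fundamentalDomain v →
      dist g (f + g) ≤ d := by
    intro f g hf
    calc dist g (f + g) = dist ((0 : EuclideanSpace ℝ (Fin n)) + g) (f + g) := by rw [zero_add]
    _ = dist (0 : EuclideanSpace ℝ (Fin n)) f := dist_add_right _ _ _
    _ ≤ d := hUdist 0 h0U f (by rw [hU']; exact hf)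
  -- UPPER BOUND
  have upper : a ≤ 2 * (h:ℝ) / ((h:ℝ) + 1) * (ρ + d) := by
    by_contra hcon
    push_neg at hcon
    have hGsub : (fun x => ((ZSpan.floor v x : EuclideanSpace ℝ (Fin n)))) '' Metric.ball p ρ
        ⊆ ((span ℤ (Set.range ⇑v) : Submodule ℤ (EuclideanSpace ℝ (Fin n))) :
          Set (EuclideanSpace ℝ (Fin n))) ∩ Metric.closedBall p (d + ρ) := by
      rintro g ⟨x, hx, rfl⟩
      refine ⟨(ZSpan.floor v x).2, ?_⟩
      rw [Metric.mem_closedBall]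
      have hfg : ZSpan.fract v x + (ZSpan.floor v x : EuclideanSpace ℝ (Fin n)) = x := by
        rw [ZSpan.fract_apply, sub_add_cancel]
      have h1 : dist ((ZSpan.floor v x : EuclideanSpace ℝ (Fin n))) x ≤ d := by
        calc dist ((ZSpan.floor v x : EuclideanSpace ℝ (Fin n))) x
            = dist ((ZSpan.floor v x : EuclideanSpace ℝ (Fin n)))
              (ZSpan.fract v x + (ZSpan.floor v x : EuclideanSpace ℝ (Fin n))) := by rw [hfg]
        _ ≤ d := hdist_lat _ _ (ZSpan.fract_mem_fundamentalDomain v x)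
      calc dist ((ZSpan.floor v x : EuclideanSpace ℝ (Fin n))) p
          ≤ dist ((ZSpan.floor v x : EuclideanSpace ℝ (Fin n))) x + dist x p :=
            dist_triangle _ _ _
      _ ≤ d + ρ := add_le_add h1 (le_of_lt (Metric.mem_ball.1 hx))
    have hGfin : ((fun x => ((ZSpan.floor v x : EuclideanSpace ℝ (Fin n)))) ''
        Metric.ball p ρ).Finite :=
      ((lat_inter_finite v _ isBounded_closedBall).subset hGsub)
    set G : Finset (EuclideanSpace ℝ (Fin n)) := hGfin.toFinset with hGdef
    have hGmem : ∀ g, g ∈ G ↔ ∃ x ∈ Metric.ball p ρ,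
        ((ZSpan.floor v x : EuclideanSpace ℝ (Fin n))) = g := by
      intro g; rw [hGdef, Set.Finite.mem_toFinset]; exact Iff.rfl
    have hGlat : ∀ g ∈ G, g ∈ span ℤ (Set.range ⇑v) := by
      intro g hg
      obtain ⟨x, hx, rfl⟩ := (hGmem g).1 hg
      exact (ZSpan.floor v x).2
    have hcov : Metric.ball p ρ ⊆ ⋃ g ∈ G, (fun y => y + g) '' ZSpan.fundamentalDomain v := by
      intro x hx
      exact Set.mem_biUnion ((hGmem _).2 ⟨x, hx, rfl⟩) (cell_cover v x)
    have hvol : volume (Metric.ball p ρ) ≤ G.card * volume (ZSpan.fundamentalDomain v) :=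
      count_upper v G _ hcov
    have hcard1 : (b + 1) * u / ↑m ≤ (G.card : ℝ) * u := by
      have h2 : ((G.card : ℝ≥0∞) * volume (ZSpan.fundamentalDomain v)) ≠ ⊤ :=
        ENNReal.mul_ne_top (ENNReal.natCast_ne_top _) (by rw [← hU']; exact hvUtop)
      have h3 := ENNReal.toReal_mono h2 hvol
      rw [ENNReal.toReal_mul, ENNReal.toReal_natCast, ← hU', ← hudef, hvol_ball] at h3
      exact h3
    have hmG : b + 1 ≤ (m : ℝ) * (G.card : ℝ) := by
      rw [div_le_iff₀ hm0] at hcard1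
      have h4 : (b+1) * u ≤ ((m:ℝ) * (G.card:ℝ)) * u := by nlinarith [hcard1]
      exact le_of_mul_le_mul_right h4 hu
    set P : Finset (EuclideanSpace ℝ (Fin n)) :=
      (M ×ˢ G).image (fun ag => ag.1 + ag.2) with hPdef
    have hPcard : P.card = m * G.card := by
      rw [hPdef, Finset.card_image_of_injOn, Finset.card_product, hMcard]
      rintro ⟨a1, g1⟩ h1 ⟨a2, g2⟩ h2 heq
      simp only [Finset.mem_coe, Finset.mem_product] at h1 h2
      obtain ⟨he1, he2⟩ := decomp_unique v (hMU2 _ h1.1) (hMU2 _ h2.1)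
        (hGlat _ h1.2) (hGlat _ h2.2) heq
      exact Prod.ext he1 he2
    have hPprop : ∀ x ∈ P, x ∈ S ∧ dist p x ≤ ρ + d := by
      intro x hx
      rw [hPdef, Finset.mem_image] at hx
      obtain ⟨⟨a0, g⟩, hag, rfl⟩ := hx
      rw [Finset.mem_product] at hag
      constructor
      · rw [hS]
        exact ⟨a0, hag.1, g, by rw [hΛ']; exact hGlat g hag.2, rfl⟩
      · obtain ⟨x0, hx0, hfl⟩ := (hGmem g).1 hag.2
        have hfg : ZSpan.fract v x0 + g = x0 := by
          rw [← hfl, ZSpan.fract_apply, sub_add_cancel]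
        have hda : dist x0 (a0 + g) ≤ d := by
          calc dist x0 (a0 + g) = dist (ZSpan.fract v x0 + g) (a0 + g) := by rw [hfg]
          _ = dist (ZSpan.fract v x0) a0 := dist_add_right _ _ _
          _ ≤ d := hUdist _ (by rw [hU']; exact ZSpan.fract_mem_fundamentalDomain v x0)
            _ (hMU _ hag.1)
        calc dist p (a0 + g) ≤ dist p x0 + dist x0 (a0 + g) := dist_triangle _ _ _
        _ ≤ ρ + d := add_le_add (le_of_lt (Metric.mem_ball'.1 hx0)) hda
    set P' : Finset (EuclideanSpace ℝ (Fin n)) := P.erase p with hP'def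
    have hP'card : b ≤ (P'.card : ℝ) := by
      have h5 : P.card ≤ P'.card + 1 := by
        by_cases hpP : p ∈ P
        · rw [hP'def, Finset.card_erase_of_mem hpP]; omega
        · rw [hP'def, Finset.erase_eq_of_notMem hpP]; omega
      have h6 : (b+1) ≤ (P.card:ℝ) := by rw [hPcard]; push_cast; exact hmG
      have h7 : (P.card : ℝ) ≤ (P'.card:ℝ) + 1 := by exact_mod_cast h5
      linarith
    have hP'h : h ≤ P'.card := by
      have : (h:ℝ) ≤ (P'.card:ℝ) := le_trans hbh hP'card
      exact_mod_cast this
    have hkC : k ≤ P'.card.choose h := by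
      have e8 : ∏ i ∈ Finset.range h, (b - (i:ℝ))
          ≤ ∏ i ∈ Finset.range h, ((P'.card:ℝ) - i) := by
        refine Finset.prod_le_prod (fun i hi => ?_) (fun i hi => ?_)
        · have : (i:ℝ) + 1 ≤ (h:ℝ) := by exact_mod_cast Finset.mem_range.1 hi
          linarith [hbh]
        · linarith [hP'card]
      rw [prod_range_choose _ _ hP'h] at e8
      have hf0 : (0:ℝ) < (h.factorial : ℝ) := by exact_mod_cast h.factorial_pos
      have e9 : ((k:ℝ) - 1) < (P'.card.choose h : ℝ) := by
        have e10 : (∏ i ∈ Finset.range h, (b - (i:ℝ))) / (h.factorial : ℝ)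
            ≤ (P'.card.choose h : ℝ) := by
          rw [div_le_iff₀ hf0]; exact e8
        exact lt_of_lt_of_le hbin.1 e10
      have e11 : (k:ℝ) < (P'.card.choose h : ℝ) + 1 := by linarith
      exact_mod_cast Nat.lt_add_one_iff.1 (by exact_mod_cast e11)
    have hTsub : ↑(P'.powersetCard h) ⊆
        {T : Finset (EuclideanSpace ℝ (Fin n)) |
          ↑T ⊆ S \ {p} ∧ T.card = h ∧ horderAvg h p T < a} := by
      intro T hT
      rw [Finset.mem_coe, Finset.mem_powersetCard] at hT
      obtain ⟨hTP, hTcard⟩ := hT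
      have hTS : ↑T ⊆ S \ {p} := by
        intro q hq
        have hqP' : q ∈ P' := hTP hq
        have hq2 := hPprop q (Finset.mem_of_mem_erase hqP')
        exact ⟨hq2.1, by simp [Finset.ne_of_mem_erase hqP']⟩
      refine ⟨hTS, hTcard, ?_⟩
      have havg := horderAvg_le hh p hTcard (R := ρ + d)
        (fun q hq => (hPprop q (Finset.mem_of_mem_erase (hTP hq))).2)
      exact lt_of_le_of_lt havg hcon
    have hfinal : k ≤ k - 1 := by
      calc k ≤ P'.card.choose h := hkC
      _ = (P'.powersetCard h).card := (Finset.card_powersetCard h P').symm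
      _ = (↑(P'.powersetCard h) : Set (Finset (EuclideanSpace ℝ (Fin n)))).ncard :=
          (Set.ncard_coe_finset _).symm
      _ ≤ _ := Set.ncard_le_ncard hTsub hlt_fin
      _ ≤ k - 1 := hlt_card
    omega
  -- LOWER BOUND
  have hSmem : ∀ x ∈ S, ∃ a0 ∈ M, ∃ g ∈ span ℤ (Set.range ⇑v), x = a0 + g := by
    intro x hx
    rw [hS] at hx
    obtain ⟨a0, ha0, g, hg, rfl⟩ := hx
    exact ⟨a0, ha0, g, by rw [hΛ'] at hg; exact hg, rfl⟩
  have lower : 2 / ((h:ℝ) + 1) * (ρ - d) ≤ a := by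
    have hQne : {T : Finset (EuclideanSpace ℝ (Fin n)) |
        ↑T ⊆ S \ {p} ∧ T.card = h ∧ horderAvg h p T ≤ a}.Nonempty := by
      rcases Set.eq_empty_or_nonempty {T : Finset (EuclideanSpace ℝ (Fin n)) |
        ↑T ⊆ S \ {p} ∧ T.card = h ∧ horderAvg h p T ≤ a} with he | hne
      · rw [he, Set.ncard_empty] at hle_card; omega
      · exact hne
    obtain ⟨T0, hT0⟩ := hQne
    have ha0 : 0 ≤ a := le_trans (horderAvg_nonneg h p T0) hT0.2.2
    by_contra hcon
    push_neg at hcon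
    have hρd : 0 < ρ - d := by
      by_contra hle
      push_neg at hle
      have : 2 / ((h:ℝ)+1) * (ρ - d) ≤ 0 :=
        mul_nonpos_of_nonneg_of_nonpos (by positivity) hle
      linarith
    set B : Set (EuclideanSpace ℝ (Fin n)) := Metric.ball p (ρ - d) with hBdef
    have hGsub2 : {g : EuclideanSpace ℝ (Fin n) | g ∈ span ℤ (Set.range ⇑v) ∧
        ∃ a0 ∈ M, a0 + g ∈ B} ⊆
        ((span ℤ (Set.range ⇑v) : Submodule ℤ (EuclideanSpace ℝ (Fin n))) :
          Set (EuclideanSpace ℝ (Fin n))) ∩ Metric.closedBall p ρ := by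
      rintro g ⟨hglat, a0, ha0, haB⟩
      refine ⟨hglat, ?_⟩
      rw [Metric.mem_closedBall]
      calc dist g p ≤ dist g (a0 + g) + dist (a0 + g) p := dist_triangle _ _ _
      _ ≤ d + (ρ - d) := add_le_add (hdist_lat _ _ (hMU2 _ ha0))
          (le_of_lt (Metric.mem_ball.1 haB))
      _ = ρ := by ring
    have hG2fin : {g : EuclideanSpace ℝ (Fin n) | g ∈ span ℤ (Set.range ⇑v) ∧
        ∃ a0 ∈ M, a0 + g ∈ B}.Finite :=
      (lat_inter_finite v _ isBounded_closedBall).subset hGsub2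
    set G2 : Finset (EuclideanSpace ℝ (Fin n)) := hG2fin.toFinset with hG2def
    have hG2mem : ∀ g, g ∈ G2 ↔ g ∈ span ℤ (Set.range ⇑v) ∧ ∃ a0 ∈ M, a0 + g ∈ B := by
      intro g; rw [hG2def, Set.Finite.mem_toFinset]; exact Iff.rfl
    have hG2lat : ∀ g ∈ G2, g ∈ span ℤ (Set.range ⇑v) := fun g hg => ((hG2mem g).1 hg).1
    have hSBsub : S ∩ B ⊆ ↑((M ×ˢ G2).image fun ag => ag.1 + ag.2) := by
      rintro x ⟨hxS, hxB⟩
      obtain ⟨a0, ha0, g, hg, rfl⟩ := hSmem x hxS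
      refine Finset.mem_coe.2 (Finset.mem_image.2 ⟨(a0, g),
        Finset.mem_product.2 ⟨ha0, ?_⟩, rfl⟩)
      exact (hG2mem g).2 ⟨hg, a0, ha0, hxB⟩
    have hSBfin : (S ∩ B).Finite := Set.Finite.subset (Finset.finite_toSet _) hSBsub
    set A : Finset (EuclideanSpace ℝ (Fin n)) := hSBfin.toFinset with hAdef
    have hAmem : ∀ x, x ∈ A ↔ x ∈ S ∧ x ∈ B := by
      intro x; rw [hAdef, Set.Finite.mem_toFinset]; exact Iff.rfl
    have hpA : p ∈ A := (hAmem p).2 ⟨hp, by rw [hBdef]; exact Metric.mem_ball_self hρd⟩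
    have hAne : A.Nonempty := ⟨p, hpA⟩
    have hAcard : A.card ≤ m * G2.card := by
      have hsub : A ⊆ (M ×ˢ G2).image fun ag => ag.1 + ag.2 := by
        intro x hx
        exact Finset.mem_coe.1 (hSBsub ((hAmem x).1 hx))
      calc A.card ≤ ((M ×ˢ G2).image fun ag => ag.1 + ag.2).card := Finset.card_le_card hsub
      _ ≤ (M ×ˢ G2).card := Finset.card_image_le
      _ = m * G2.card := by rw [Finset.card_product, hMcard]
    set D : ℝ := A.sup' hAne (fun x => dist x p) with hDdef
    have hD0 : 0 ≤ D := by
      have h1 := Finset.le_sup' (fun x => dist x p) hpA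
      simp only [dist_self] at h1
      exact h1
    have hDlt : D < ρ - d := by
      rw [hDdef]
      rw [Finset.sup'_lt_iff hAne]
      intro x hx
      exact Metric.mem_ball.1 ((hAmem x).1 hx).2
    have hcells : ∀ g ∈ G2, (fun y => y + g) '' ZSpan.fundamentalDomain v ⊆
        Metric.closedBall p (d + D) := by
      rintro g hg y ⟨u0, hu0, rfl⟩
      obtain ⟨hglat, a0, ha0, haB⟩ := (hG2mem g).1 hg
      have h1 : dist (a0 + g) p ≤ D := by
        have haA : a0 + g ∈ A := (hAmem _).2 ⟨by
          rw [hS]; exact ⟨a0, ha0, g, by rw [hΛ']; exact hglat, rfl⟩, haB⟩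
        exact Finset.le_sup' (fun x => dist x p) haA
      have h2 : dist (u0 + g) (a0 + g) ≤ d := by
        rw [dist_add_right]
        exact hUdist _ (by rw [hU']; exact hu0) _ (hMU _ ha0)
      rw [Metric.mem_closedBall]
      calc dist (u0 + g) p ≤ dist (u0 + g) (a0 + g) + dist (a0 + g) p := dist_triangle _ _ _
      _ ≤ d + D := add_le_add h2 h1
    have hvol2 := count_lower v G2 hG2lat _ hcells
    have hcard2 : (G2.card : ℝ) * u ≤ (d + D)^n * w := by
      have h3 := ENNReal.toReal_mono measure_closedBall_lt_top.ne hvol2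
      rw [ENNReal.toReal_mul, ENNReal.toReal_natCast, ← hU', ← hudef,
        hvol_cb _ (by linarith)] at h3
      exact h3
    have hlt2 : (d + D)^n * w < (b+1) * u / ↑m := by
      have h4 : (d + D)^n < ρ^n := by
        apply pow_lt_pow_left₀ (by linarith) (by linarith) hn0
      calc (d+D)^n * w < ρ^n * w := mul_lt_mul_of_pos_right h4 hw
      _ = (b+1)*u/↑m := by rw [hρn]; field_simp
    have hmG2 : (m:ℝ) * (G2.card:ℝ) < b + 1 := by
      have h5 : (G2.card:ℝ) * u < (b+1)*u/↑m := lt_of_le_of_lt hcard2 hlt2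
      rw [lt_div_iff₀ hm0] at h5
      have h6 : ((m:ℝ) * (G2.card:ℝ)) * u < (b+1) * u := by
        calc ((m:ℝ) * (G2.card:ℝ)) * u = (G2.card:ℝ) * u * m := by ring
        _ < (b+1) * u := h5
      exact lt_of_mul_lt_mul_right h6 hu.le
    have hAb : (A.card : ℝ) < b + 1 := by
      have h7 : (A.card : ℝ) ≤ (m:ℝ) * (G2.card:ℝ) := by exact_mod_cast hAcard
      linarith
    set F1 : Finset (EuclideanSpace ℝ (Fin n)) := A.erase p with hF1def
    have hF1b : (F1.card : ℝ) < b := by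
      rw [hF1def, Finset.card_erase_of_mem hpA]
      have hA1 : 1 ≤ A.card := Finset.card_pos.2 hAne
      rw [Nat.cast_sub hA1]
      push_cast
      linarith
    have hQsub : {T : Finset (EuclideanSpace ℝ (Fin n)) |
        ↑T ⊆ S \ {p} ∧ T.card = h ∧ horderAvg h p T ≤ a} ⊆
        ↑(F1.powersetCard h) := by
      rintro T ⟨hTS, hTcard, hTavg⟩
      rw [Finset.mem_coe, Finset.mem_powersetCard]
      refine ⟨?_, hTcard⟩
      intro q hq
      have hqS := hTS (Finset.mem_coe.2 hq)
      have hdq : dist p q < ρ - d := by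
        have h6 := le_horderAvg hh p hTcard hq
        have h7 : 2/((h:ℝ)+1) * dist p q < 2/((h:ℝ)+1) * (ρ - d) :=
          lt_of_le_of_lt (le_trans h6 hTavg) hcon
        exact lt_of_mul_lt_mul_left h7 (by positivity)
      rw [hF1def, Finset.mem_erase]
      refine ⟨fun hqp => hqS.2 (Set.mem_singleton_iff.2 hqp), ?_⟩
      exact (hAmem q).2 ⟨hqS.1, by rw [hBdef, Metric.mem_ball, dist_comm]; exact hdq⟩
    have hC : F1.card.choose h < k := by
      by_cases hhF : h ≤ F1.card
      · have e12 : ∏ i ∈ Finset.range h, ((F1.card:ℝ) - i)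
            < ∏ i ∈ Finset.range h, (b - (i:ℝ)) := by
          apply Finset.prod_lt_prod_of_nonempty
          · intro i hi
            have hi1 : (i:ℝ) + 1 ≤ (h:ℝ) := by exact_mod_cast Finset.mem_range.1 hi
            have hi2 : (h:ℝ) ≤ (F1.card:ℝ) := by exact_mod_cast hhF
            linarith
          · intro i _; linarith [hF1b]
          · exact Finset.nonempty_range_iff.2 (by omega)
        rw [prod_range_choose _ _ hhF] at e12
        have hf0 : (0:ℝ) < (h.factorial:ℝ) := by exact_mod_cast h.factorial_pos
        have e13 : (F1.card.choose h : ℝ) < (k:ℝ) := by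
          have e14 : (F1.card.choose h : ℝ)
              < (∏ i ∈ Finset.range h, (b - (i:ℝ)))/(h.factorial:ℝ) := by
            rw [lt_div_iff₀ hf0]; exact e12
          exact lt_of_lt_of_le e14 hbin.2
        exact_mod_cast e13
      · rw [Nat.choose_eq_zero_of_lt (by omega)]; omega
    have hfin2 : k ≤ F1.card.choose h := by
      calc k ≤ {T : Finset (EuclideanSpace ℝ (Fin n)) |
          ↑T ⊆ S \ {p} ∧ T.card = h ∧ horderAvg h p T ≤ a}.ncard := hle_card
      _ ≤ (↑(F1.powersetCard h) : Set (Finset (EuclideanSpace ℝ (Fin n)))).ncard :=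
          Set.ncard_le_ncard hQsub (Finset.finite_toSet _)
      _ = (F1.powersetCard h).card := Set.ncard_coe_finset _
      _ = F1.card.choose h := Finset.card_powersetCard h F1
    omega
  exact ⟨lower, upper⟩
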